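/- arXiv:2010.10886 — 3 statements merged into one kernel-verified Lean document; each statement's English description precedes it below -/
import Mathlib

section
/- (Proposition 1, per-task exponential inequality.) For every λ ∈ ℝ, E over the joint distribution of (W, Z̃, S, R) of exp( λ·ΔL̂(W, Z̃, R, S) − λ²(b−a)²/(2M) − ı(W; S | Z̃, R) ) ≤ 1, where ı(W;S|Z̃,R) = log( dP_{WS|Z̃R} / d(P_{W|Z̃R} ⊗ P_S) ) is the conditional information density. -/
open MeasureTheory ProbabilityTheory Real

lemma meas_eval_bool {β α : Type*} [MeasurableSpace β] [MeasurableSpace α]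
    {f : β → Bool → α} {g : β → Bool} (hf : Measurable f) (hg : Measurable g) :
    Measurable fun x => f x (g x) := by
  have h : (fun x => f x (g x)) = fun x => if g x = true then f x true else f x false := by
    funext x; cases hgx : g x <;> simp
  rw [h]
  exact Measurable.ite (hg (MeasurableSet.singleton true))
    ((measurable_pi_apply true).comp hf) ((measurable_pi_apply false).comp hf)

lemma exp_avg_bound {M : ℕ} (hM : 0 < M) (lam C : ℝ) (hC : 0 ≤ C)
    (f : Fin M → Bool → ℝ) (hsym : ∀ j, f j true = - f j false)
    (hbd : ∀ j, |f j false| ≤ C) :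
    ∑ s : Fin M → Bool, ((2:ℝ) ^ M)⁻¹ * Real.exp ((lam / M) * ∑ j, f j (s j))
      ≤ Real.exp (lam ^ 2 * C ^ 2 / (2 * M)) := by
  have hM' : (M:ℝ) ≠ 0 := Nat.cast_ne_zero.mpr hM.ne'
  calc ∑ s : Fin M → Bool, ((2:ℝ)^M)⁻¹ * Real.exp ((lam/M) * ∑ j, f j (s j))
      = ((2:ℝ)^M)⁻¹ * ∑ s : Fin M → Bool, ∏ j, Real.exp ((lam/M) * f j (s j)) := by
        rw [Finset.mul_sum]
        refine Finset.sum_congr rfl (fun s _ => ?_)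
        congr 1
        rw [Finset.mul_sum, Real.exp_sum]
    _ = ((2:ℝ)^M)⁻¹ * ∏ j, ∑ t : Bool, Real.exp ((lam/M) * f j t) := by
        rw [Fintype.prod_sum]
    _ = ∏ j : Fin M, Real.cosh ((lam/M) * f j false) := by
        have h2 : ((2:ℝ)^M)⁻¹ = ∏ _j : Fin M, (2:ℝ)⁻¹ := by
          simp [Finset.prod_const, inv_pow]
        rw [h2, ← Finset.prod_mul_distrib]
        refine Finset.prod_congr rfl (fun j _ => ?_)
        rw [Fintype.sum_bool, hsym j]
        have h3 : lam / M * -f j false = -(lam / M * f j false) := by ring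
        rw [h3, Real.cosh_eq]
        ring
    _ ≤ ∏ _j : Fin M, Real.exp (lam^2 * C^2 / (2 * M^2)) := by
        refine Finset.prod_le_prod (fun j _ => (Real.cosh_pos _).le) (fun j _ => ?_)
        refine (Real.cosh_le_exp_half_sq _).trans (Real.exp_le_exp.mpr ?_)
        have hd2 : (f j false)^2 ≤ C^2 := by
          rw [← sq_abs]; exact pow_le_pow_left₀ (abs_nonneg _) (hbd j) 2
        have : (lam / M * f j false) ^ 2 / 2 = lam^2 * (f j false)^2 / (2 * M^2) := by
          field_simp
        rw [this]
        gcongr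
    _ = Real.exp (lam ^ 2 * C ^ 2 / (2 * M)) := by
        rw [Finset.prod_const, ← Real.exp_nat_mul]
        congr 1
        field_simp
        rw [Finset.card_univ, Fintype.card_fin]
        ring

/-- Proposition 1 (per-task exponential inequality).  `Zt ω r j s` is the supersample point of
the task selected by `r`, sample index `j`, selection bit `s`.  `muJ` is the joint law of
`(W, S, Z̃, R)` and `nuP` is the decoupled law in which `S` is replaced by an independent
uniform Bernoulli vector; `idens` is the conditional information density
`ı(W;S|Z̃,R) = log(dP_{WS|Z̃R}/d(P_{W|Z̃R} ⊗ P_S))`.  For every `λ`,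
`E[exp(λ·ΔL̂ − λ²(b−a)²/(2M) − ı)] ≤ 1`. -/
theorem stmt_8 {Ω 𝒲 𝒵 : Type*} [MeasurableSpace Ω] [MeasurableSpace 𝒲] [MeasurableSpace 𝒵]
    (P : Measure Ω) [IsProbabilityMeasure P]
    (M : ℕ) (hM : 0 < M) (a b : ℝ) (hab : a ≤ b)
    (ℓ : 𝒲 → 𝒵 → ℝ) (hℓmeas : Measurable (Function.uncurry ℓ))
    (hℓbdd : ∀ w z, a ≤ ℓ w z ∧ ℓ w z ≤ b)
    (W : Ω → 𝒲) (Zt : Ω → Bool → Fin M → Bool → 𝒵)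
    (S : Ω → Fin M → Bool) (R : Ω → Bool)
    (hW : Measurable W) (hZt : Measurable Zt) (hS : Measurable S) (hR : Measurable R)
    (muJ nuP : Measure (𝒲 × (Fin M → Bool) × (Bool → Fin M → Bool → 𝒵) × Bool))
    (hmuJ : muJ = P.map (fun ω => (W ω, S ω, Zt ω, R ω)))
    (hnuP : nuP = (P.prod ((PMF.uniformOfFintype (Fin M → Bool)).toMeasure)).map
      (fun p => (W p.1, p.2, Zt p.1, R p.1)))
    (hac : muJ ≪ nuP)
    (idens : 𝒲 × (Fin M → Bool) × (Bool → Fin M → Bool → 𝒵) × Bool → ℝ)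
    (hidens : Measurable idens)
    (hd : muJ.rnDeriv nuP =ᵐ[nuP] fun x => ENNReal.ofReal (Real.exp (idens x)))
    (ΔL : 𝒲 × (Fin M → Bool) × (Bool → Fin M → Bool → 𝒵) × Bool → ℝ)
    (hΔL : ∀ w s zt r, ΔL (w, s, zt, r) =
      (M : ℝ)⁻¹ * ∑ j, ℓ w (zt r j (!(s j))) - (M : ℝ)⁻¹ * ∑ j, ℓ w (zt r j (s j))) :
    ∀ lam : ℝ,
      ∫ x, Real.exp (lam * ΔL x - lam ^ 2 * (b - a) ^ 2 / (2 * M) - idens x) ∂muJ ≤ 1 := by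
  intro lam
  let X := 𝒲 × (Fin M → Bool) × (Bool → Fin M → Bool → 𝒵) × Bool
  set c : ℝ := lam ^ 2 * (b - a) ^ 2 / (2 * M) with hc
  -- ΔL is measurable
  have hΔLfun : ΔL = fun x : X =>
      (M : ℝ)⁻¹ * ∑ j, ℓ x.1 (x.2.2.1 x.2.2.2 j (!(x.2.1 j)))
      - (M : ℝ)⁻¹ * ∑ j, ℓ x.1 (x.2.2.1 x.2.2.2 j (x.2.1 j)) := by
    funext x
    obtain ⟨w, s, zt, r⟩ := x
    exact hΔL w s zt r
  have hmeasZt : ∀ (g : X → Bool) (j : Fin M), Measurable g →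
      Measurable fun x : X => ℓ x.1 (x.2.2.1 x.2.2.2 j (g x)) := by
    intro g j hg
    have h1 : Measurable fun x : X => x.2.2.1 x.2.2.2 :=
      meas_eval_bool (measurable_fst.comp (measurable_snd.comp measurable_snd))
        (measurable_snd.comp (measurable_snd.comp measurable_snd))
    have h2 : Measurable fun x : X => x.2.2.1 x.2.2.2 j :=
      (measurable_pi_apply j).comp h1
    have h3 : Measurable fun x : X => x.2.2.1 x.2.2.2 j (g x) :=
      meas_eval_bool h2 hg
    exact hℓmeas.comp (measurable_fst.prodMk h3)
  have hΔLmeas : Measurable ΔL := by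
    rw [hΔLfun]
    refine Measurable.sub (Measurable.const_mul ?_ _) (Measurable.const_mul ?_ _)
    · refine Finset.measurable_sum _ fun j _ => hmeasZt _ j ?_
      have h0 : Measurable fun x : X => x.2.1 j :=
        (measurable_pi_apply j).comp (measurable_fst.comp measurable_snd)
      exact (measurable_of_countable Bool.not).comp h0
    · exact Finset.measurable_sum _ fun j _ => hmeasZt _ j
        ((measurable_pi_apply j).comp (measurable_fst.comp measurable_snd))
  -- measures are probability measures
  have hφmeas : Measurable fun p : Ω × (Fin M → Bool) => (W p.1, p.2, Zt p.1, R p.1) :=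
    ((hW.comp measurable_fst).prodMk (measurable_snd.prodMk
      ((hZt.comp measurable_fst).prodMk (hR.comp measurable_fst))))
  have hnuProb : IsProbabilityMeasure nuP := by
    rw [hnuP]; exact Measure.isProbabilityMeasure_map hφmeas.aemeasurable
  have hmuProb : IsProbabilityMeasure muJ := by
    rw [hmuJ]
    exact Measure.isProbabilityMeasure_map
      ((hW.prodMk (hS.prodMk (hZt.prodMk hR))).aemeasurable)
  -- step 1: Bochner integral to lintegral
  have hgmeas : Measurable fun x : X => Real.exp (lam * ΔL x - c - idens x) :=
    (((hΔLmeas.const_mul lam).sub measurable_const).sub hidens).exp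
  rw [MeasureTheory.integral_eq_lintegral_of_nonneg_ae
    (Filter.Eventually.of_forall fun x => (Real.exp_pos _).le)
    hgmeas.aestronglyMeasurable]
  -- step 2: the lintegral is ≤ 1
  have key : (∫⁻ x, ENNReal.ofReal (Real.exp (lam * ΔL x - c - idens x)) ∂muJ) ≤ 1 := by
    have hF : Measurable fun x : X => ENNReal.ofReal (Real.exp (lam * ΔL x - c - idens x)) :=
      hgmeas.ennreal_ofReal
    rw [← MeasureTheory.lintegral_rnDeriv_mul hac hF.aemeasurable]
    -- rewrite using the density
    have hrw : (fun x => muJ.rnDeriv nuP x * ENNReal.ofReal (Real.exp (lam * ΔL x - c - idens x)))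
        =ᵐ[nuP] fun x => ENNReal.ofReal (Real.exp (lam * ΔL x - c)) := by
      filter_upwards [hd] with x hx
      rw [hx, ← ENNReal.ofReal_mul (Real.exp_pos _).le, ← Real.exp_add]
      congr 2
      ring
    rw [lintegral_congr_ae hrw]
    -- step 3: push to the product space
    have hGmeas : Measurable fun x : X => ENNReal.ofReal (Real.exp (lam * ΔL x - c)) :=
      ((hΔLmeas.const_mul lam).sub measurable_const).exp.ennreal_ofReal
    rw [hnuP, MeasureTheory.lintegral_map hGmeas hφmeas]
    have hcomp : Measurable fun p : Ω × (Fin M → Bool) =>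
        ENNReal.ofReal (Real.exp (lam * ΔL (W p.1, p.2, Zt p.1, R p.1) - c)) :=
      hGmeas.comp hφmeas
    rw [MeasureTheory.lintegral_prod _ hcomp.aemeasurable]
    -- step 4: inner integral bound
    have hinner : ∀ ω : Ω,
        (∫⁻ s, ENNReal.ofReal (Real.exp (lam * ΔL (W ω, s, Zt ω, R ω) - c))
          ∂(PMF.uniformOfFintype (Fin M → Bool)).toMeasure) ≤ 1 := by
      intro ω
      rw [MeasureTheory.lintegral_fintype]
      have hcard : (Fintype.card (Fin M → Bool)) = 2 ^ M := by simp
      have hμs : ∀ s : Fin M → Bool,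
          (PMF.uniformOfFintype (Fin M → Bool)).toMeasure ({s} : Set (Fin M → Bool))
            = ENNReal.ofReal (((2:ℝ) ^ M)⁻¹) := by
        intro s
        rw [PMF.toMeasure_apply_singleton _ _ (MeasurableSet.singleton s),
          PMF.uniformOfFintype_apply, hcard]
        rw [ENNReal.ofReal_inv_of_pos (by positivity)]
        congr 1
        rw [ENNReal.ofReal_pow (by norm_num), ENNReal.ofReal_ofNat]
        simp
      calc (∑ s : Fin M → Bool, ENNReal.ofReal (Real.exp (lam * ΔL (W ω, s, Zt ω, R ω) - c))
              * (PMF.uniformOfFintype (Fin M → Bool)).toMeasure {s})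
          = ∑ s : Fin M → Bool, ENNReal.ofReal
              (((2:ℝ) ^ M)⁻¹ * Real.exp (lam * ΔL (W ω, s, Zt ω, R ω) - c)) := by
            refine Finset.sum_congr rfl fun s _ => ?_
            rw [hμs s, ← ENNReal.ofReal_mul (Real.exp_pos _).le, mul_comm]
        _ = ENNReal.ofReal (∑ s : Fin M → Bool,
              ((2:ℝ) ^ M)⁻¹ * Real.exp (lam * ΔL (W ω, s, Zt ω, R ω) - c)) := by
            rw [ENNReal.ofReal_sum_of_nonneg fun s _ => by positivity]
        _ ≤ 1 := by
            rw [← ENNReal.ofReal_one]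
            apply ENNReal.ofReal_le_ofReal
            -- the real inequality
            set f : Fin M → Bool → ℝ := fun j t =>
              ℓ (W ω) (Zt ω (R ω) j (!t)) - ℓ (W ω) (Zt ω (R ω) j t) with hf
            have hΔeq : ∀ s : Fin M → Bool,
                lam * ΔL (W ω, s, Zt ω, R ω) - c = (lam / M) * ∑ j, f j (s j) - c := by
              intro s
              rw [hΔL]
              have hM' : (M:ℝ) ≠ 0 := Nat.cast_ne_zero.mpr hM.ne'
              rw [hf]
              simp only [Finset.sum_sub_distrib]
              field_simp
            have hsym : ∀ j, f j true = - f j false := by intro j; simp [hf]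
            have hbd : ∀ j, |f j false| ≤ b - a := by
              intro j
              rw [abs_le]
              constructor
              · have h1 := (hℓbdd (W ω) (Zt ω (R ω) j true)).1
                have h2 := (hℓbdd (W ω) (Zt ω (R ω) j false)).2
                simp only [hf, Bool.not_false]
                linarith
              · have h1 := (hℓbdd (W ω) (Zt ω (R ω) j true)).2
                have h2 := (hℓbdd (W ω) (Zt ω (R ω) j false)).1
                simp only [hf, Bool.not_false]
                linarith
            have hkey := exp_avg_bound hM lam (b - a) (by linarith) f hsym hbd
            calc ∑ s : Fin M → Bool, ((2:ℝ) ^ M)⁻¹ * Real.exp (lam * ΔL (W ω, s, Zt ω, R ω) - c)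
                = ∑ s : Fin M → Bool, ((2:ℝ) ^ M)⁻¹
                    * (Real.exp ((lam / M) * ∑ j, f j (s j)) * Real.exp (-c)) := by
                  refine Finset.sum_congr rfl fun s _ => ?_
                  rw [hΔeq s, Real.exp_sub, Real.exp_neg]
                  ring
              _ = (∑ s : Fin M → Bool, ((2:ℝ) ^ M)⁻¹
                    * Real.exp ((lam / M) * ∑ j, f j (s j))) * Real.exp (-c) := by
                  rw [Finset.sum_mul]
                  exact Finset.sum_congr rfl fun s _ => by ring
              _ ≤ Real.exp c * Real.exp (-c) := by
                  exact mul_le_mul_of_nonneg_right hkey (Real.exp_pos _).le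
              _ = 1 := by rw [← Real.exp_add]; simp
    calc (∫⁻ ω, ∫⁻ s, ENNReal.ofReal (Real.exp (lam * ΔL (W ω, s, Zt ω, R ω) - c))
            ∂(PMF.uniformOfFintype (Fin M → Bool)).toMeasure ∂P)
        ≤ ∫⁻ _ω, 1 ∂P := lintegral_mono fun ω => hinner ω
      _ = 1 := by simp
  have hfin := ENNReal.toReal_mono ENNReal.one_ne_top key
  rw [ENNReal.toReal_one] at hfin
  exact hfin
end

section
/- (Consequence of Proposition 1 via Jensen and λ-optimization.) E[ΔL̂(W, Z̃, R, S)] ≤ sqrt( 2(b−a)² · I(W; S | Z̃, R) / M ), where I(W;S|Z̃,R) is the conditional mutual information between the base-learner output W and the selection vector S given the supersample Z̃ and the task selector R. -/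
open MeasureTheory ProbabilityTheory Real

lemma aux_measurable_eval_bool {β : Type*} [MeasurableSpace β] :
    Measurable (fun p : (Bool → β) × Bool => p.1 p.2) := by
  have h : (fun p : (Bool → β) × Bool => p.1 p.2)
      = fun p => if p.2 = true then p.1 true else p.1 false := by
    funext p; cases hp : p.2 <;> simp [hp]
  rw [h]
  exact Measurable.ite (measurable_snd (measurableSet_singleton true))
    ((measurable_pi_apply true).comp measurable_fst)
    ((measurable_pi_apply false).comp measurable_fst)

lemma aux_hoeff_sum {M : ℕ} (hM : 0 < M) (a b l : ℝ) (hab : a ≤ b)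
    (g : Fin M → Bool → ℝ) (hg : ∀ j v, a ≤ g j v ∧ g j v ≤ b) :
    ∑ s : Fin M → Bool,
        Real.exp (l * ((M:ℝ)⁻¹ * ∑ j, g j (!(s j)) - (M:ℝ)⁻¹ * ∑ j, g j (s j)))
      ≤ 2 ^ M * Real.exp (l ^ 2 * (b - a) ^ 2 / (2 * M)) := by
  classical
  have hMr : (0:ℝ) < M := Nat.cast_pos.mpr hM
  have hM0 : (M:ℝ) ≠ 0 := ne_of_gt hMr
  set t : ℝ := l / M with ht
  have hexp : ∀ s : Fin M → Bool,
      Real.exp (l * ((M:ℝ)⁻¹ * ∑ j, g j (!(s j)) - (M:ℝ)⁻¹ * ∑ j, g j (s j)))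
        = ∏ j, Real.exp (t * (g j (!(s j)) - g j (s j))) := by
    intro s
    rw [← Real.exp_sum]
    congr 1
    have h1 : ∑ j, t * (g j (!(s j)) - g j (s j))
        = t * (∑ j, g j (!(s j)) - ∑ j, g j (s j)) := by
      rw [← Finset.mul_sum, Finset.sum_sub_distrib]
    rw [h1, ht]
    field_simp
  have hsum : ∑ s : Fin M → Bool, ∏ j, Real.exp (t * (g j (!(s j)) - g j (s j)))
      = ∏ j : Fin M, ∑ v : Bool, Real.exp (t * (g j (!v) - g j v)) :=
    (Fintype.prod_sum fun j v => Real.exp (t * (g j (!v) - g j v))).symm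
  have hfac : ∀ j : Fin M, ∑ v : Bool, Real.exp (t * (g j (!v) - g j v))
      ≤ 2 * Real.exp (l ^ 2 * (b - a) ^ 2 / (2 * M ^ 2)) := by
    intro j
    have hsumb : ∑ v : Bool, Real.exp (t * (g j (!v) - g j v))
        = Real.exp (t * (g j true - g j false)) + Real.exp (-(t * (g j true - g j false))) := by
      rw [Fintype.sum_bool]
      have hh : -(t * (g j true - g j false)) = t * (g j false - g j true) := by ring
      rw [hh]
      simp only [Bool.not_true, Bool.not_false]
      ring
    rw [hsumb]
    have hcosh : Real.exp (t * (g j true - g j false))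
          + Real.exp (-(t * (g j true - g j false)))
        = 2 * Real.cosh (t * (g j true - g j false)) := by
      rw [Real.cosh_eq]; ring
    rw [hcosh]
    have h1 := Real.cosh_le_exp_half_sq (t * (g j true - g j false))
    have h2 : (t * (g j true - g j false)) ^ 2 / 2 ≤ l ^ 2 * (b - a) ^ 2 / (2 * M ^ 2) := by
      have hb : (g j true - g j false) ^ 2 ≤ (b - a) ^ 2 := by
        have h3 := (hg j true).1
        have h4 := (hg j true).2
        have h5 := (hg j false).1
        have h6 := (hg j false).2
        have : |g j true - g j false| ≤ b - a := by
          rw [abs_le]; constructor <;> linarith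
        nlinarith [abs_nonneg (g j true - g j false), sq_abs (g j true - g j false)]
      have ht2 : t ^ 2 = l ^ 2 / M ^ 2 := by rw [ht]; ring
      rw [mul_pow, ht2]
      rw [div_le_div_iff₀ (by norm_num) (by positivity)]
      have hM2 : (0:ℝ) < (M:ℝ) ^ 2 := by positivity
      have := mul_le_mul_of_nonneg_left hb (by positivity : (0:ℝ) ≤ l ^ 2 / M ^ 2)
      calc l ^ 2 / M ^ 2 * (g j true - g j false) ^ 2 * (2 * (M:ℝ) ^ 2)
          ≤ l ^ 2 / M ^ 2 * (b - a) ^ 2 * (2 * (M:ℝ) ^ 2) := by nlinarith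
        _ = l ^ 2 * (b - a) ^ 2 * 2 := by field_simp
    calc 2 * Real.cosh (t * (g j true - g j false))
        ≤ 2 * Real.exp ((t * (g j true - g j false)) ^ 2 / 2) := by linarith
      _ ≤ 2 * Real.exp (l ^ 2 * (b - a) ^ 2 / (2 * M ^ 2)) := by
          have := Real.exp_le_exp.mpr h2; linarith
  calc ∑ s : Fin M → Bool,
        Real.exp (l * ((M:ℝ)⁻¹ * ∑ j, g j (!(s j)) - (M:ℝ)⁻¹ * ∑ j, g j (s j)))
      = ∑ s : Fin M → Bool, ∏ j, Real.exp (t * (g j (!(s j)) - g j (s j))) := by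
        exact Finset.sum_congr rfl fun s _ => hexp s
    _ = ∏ j : Fin M, ∑ v : Bool, Real.exp (t * (g j (!v) - g j v)) := hsum
    _ ≤ ∏ j : Fin M, (2 * Real.exp (l ^ 2 * (b - a) ^ 2 / (2 * M ^ 2))) := by
        apply Finset.prod_le_prod
        · intro j _
          exact Finset.sum_nonneg fun v _ => (Real.exp_pos _).le
        · intro j _; exact hfac j
    _ = 2 ^ M * Real.exp (l ^ 2 * (b - a) ^ 2 / (2 * M)) := by
        rw [Finset.prod_const, Finset.card_univ, Fintype.card_fin, mul_pow,
          ← Real.exp_nat_mul]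
        congr 2
        field_simp

/-- Consequence of Proposition 1 via Jensen and λ-optimization: the expected supersample gap is
bounded as `E[ΔL̂(W,Z̃,R,S)] ≤ sqrt(2(b−a)²·I(W;S|Z̃,R)/M)`, where the conditional mutual
information `I(W;S|Z̃,R)` is the expectation under the joint law of the conditional information
density `idens`. -/
theorem stmt_9 {Ω 𝒲 𝒵 : Type*} [MeasurableSpace Ω] [MeasurableSpace 𝒲] [MeasurableSpace 𝒵]
    (P : Measure Ω) [IsProbabilityMeasure P]
    (M : ℕ) (hM : 0 < M) (a b : ℝ) (hab : a ≤ b)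
    (ℓ : 𝒲 → 𝒵 → ℝ) (hℓmeas : Measurable (Function.uncurry ℓ))
    (hℓbdd : ∀ w z, a ≤ ℓ w z ∧ ℓ w z ≤ b)
    (W : Ω → 𝒲) (Zt : Ω → Bool → Fin M → Bool → 𝒵)
    (S : Ω → Fin M → Bool) (R : Ω → Bool)
    (hW : Measurable W) (hZt : Measurable Zt) (hS : Measurable S) (hR : Measurable R)
    (muJ nuP : Measure (𝒲 × (Fin M → Bool) × (Bool → Fin M → Bool → 𝒵) × Bool))
    (hmuJ : muJ = P.map (fun ω => (W ω, S ω, Zt ω, R ω)))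
    (hnuP : nuP = (P.prod ((PMF.uniformOfFintype (Fin M → Bool)).toMeasure)).map
      (fun p => (W p.1, p.2, Zt p.1, R p.1)))
    (hac : muJ ≪ nuP)
    (idens : 𝒲 × (Fin M → Bool) × (Bool → Fin M → Bool → 𝒵) × Bool → ℝ)
    (hidens : Measurable idens) (hidensint : Integrable idens muJ)
    (hd : muJ.rnDeriv nuP =ᵐ[nuP] fun x => ENNReal.ofReal (Real.exp (idens x)))
    (ΔL : 𝒲 × (Fin M → Bool) × (Bool → Fin M → Bool → 𝒵) × Bool → ℝ)
    (hΔLint : Integrable ΔL muJ)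
    (hΔL : ∀ w s zt r, ΔL (w, s, zt, r) =
      (M : ℝ)⁻¹ * ∑ j, ℓ w (zt r j (!(s j))) - (M : ℝ)⁻¹ * ∑ j, ℓ w (zt r j (s j))) :
    ∫ x, ΔL x ∂muJ ≤
      Real.sqrt (2 * (b - a) ^ 2 * (∫ x, idens x ∂muJ) / M) := by
  classical
  have hMr : (0:ℝ) < M := Nat.cast_pos.mpr hM
  have hMne : (M:ℝ) ≠ 0 := ne_of_gt hMr
  set c : ℝ := (b - a) ^ 2 with hc
  have hmapJ : Measurable (fun ω => (W ω, S ω, Zt ω, R ω)) :=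
    hW.prodMk (hS.prodMk (hZt.prodMk hR))
  have hmapP : Measurable
      (fun p : Ω × (Fin M → Bool) => (W p.1, p.2, Zt p.1, R p.1)) :=
    (hW.comp measurable_fst).prodMk (measurable_snd.prodMk
      ((hZt.comp measurable_fst).prodMk (hR.comp measurable_fst)))
  haveI hPnu : IsProbabilityMeasure nuP := by
    rw [hnuP]; exact Measure.isProbabilityMeasure_map hmapP.aemeasurable
  haveI hPmu : IsProbabilityMeasure muJ := by
    rw [hmuJ]; exact Measure.isProbabilityMeasure_map hmapJ.aemeasurable
  have hΔLeq : ΔL = fun x => (M : ℝ)⁻¹ * ∑ j, ℓ x.1 (x.2.2.1 x.2.2.2 j (!(x.2.1 j)))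
      - (M : ℝ)⁻¹ * ∑ j, ℓ x.1 (x.2.2.1 x.2.2.2 j (x.2.1 j)) := by
    funext x
    obtain ⟨w, s, zt, r⟩ := x
    exact hΔL w s zt r
  have hzr : Measurable (fun x : 𝒲 × (Fin M → Bool) × (Bool → Fin M → Bool → 𝒵) × Bool =>
      x.2.2.1 x.2.2.2) :=
    aux_measurable_eval_bool.comp
      ((measurable_fst.comp (measurable_snd.comp measurable_snd)).prodMk
        (measurable_snd.comp (measurable_snd.comp measurable_snd)))
  have hterm : ∀ (j : Fin M) (cb : Bool → Bool),
      Measurable (fun x : 𝒲 × (Fin M → Bool) × (Bool → Fin M → Bool → 𝒵) × Bool =>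
        ℓ x.1 (x.2.2.1 x.2.2.2 j (cb (x.2.1 j)))) := by
    intro j cb
    have h1 : Measurable (fun x : 𝒲 × (Fin M → Bool) × (Bool → Fin M → Bool → 𝒵) × Bool =>
        x.2.2.1 x.2.2.2 j (cb (x.2.1 j))) :=
      aux_measurable_eval_bool.comp
        (((measurable_pi_apply j).comp hzr).prodMk
          ((Measurable.of_discrete (f := cb)).comp
            ((measurable_pi_apply j).comp (measurable_fst.comp measurable_snd))))
    exact hℓmeas.comp (measurable_fst.prodMk h1)
  have hΔLmeas : Measurable ΔL := by
    rw [hΔLeq]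
    apply Measurable.sub
    · exact (Finset.measurable_sum _ fun j _ => hterm j (fun v => !v)).const_mul _
    · exact (Finset.measurable_sum _ fun j _ => hterm j id).const_mul _
  -- change of measure
  have hCM : ∀ f : 𝒲 × (Fin M → Bool) × (Bool → Fin M → Bool → 𝒵) × Bool → ℝ, Measurable f →
      ∫⁻ x, ENNReal.ofReal (Real.exp (f x - idens x)) ∂muJ
        = ∫⁻ x, ENNReal.ofReal (Real.exp (f x)) ∂nuP := by
    intro f hf
    conv_lhs => rw [← Measure.withDensity_rnDeriv_eq muJ nuP hac, withDensity_congr_ae hd]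
    rw [lintegral_withDensity_eq_lintegral_mul _
      (hidens.exp).ennreal_ofReal (g := fun x => ENNReal.ofReal (Real.exp (f x - idens x)))
      ((hf.sub hidens).exp).ennreal_ofReal]
    apply lintegral_congr
    intro x
    simp only [Pi.mul_apply]
    rw [← ENNReal.ofReal_mul (Real.exp_pos _).le, ← Real.exp_add]
    congr 2
    ring
  -- exp bound to integral bound
  have hEB : ∀ f : 𝒲 × (Fin M → Bool) × (Bool → Fin M → Bool → 𝒵) × Bool → ℝ,
      Measurable f → Integrable f muJ →
      (∫⁻ x, ENNReal.ofReal (Real.exp (f x)) ∂muJ) ≤ 1 → ∫ x, f x ∂muJ ≤ 0 := by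
    intro f hf hfi hle
    have hexpm : Measurable fun x => Real.exp (f x) := hf.exp
    have hexpint : Integrable (fun x => Real.exp (f x)) muJ := by
      refine ⟨hexpm.aestronglyMeasurable, ?_⟩
      rw [hasFiniteIntegral_iff_ofReal (Filter.Eventually.of_forall fun x => (Real.exp_pos _).le)]
      exact lt_of_le_of_lt hle ENNReal.one_lt_top
    have h1 : ∫ x, Real.exp (f x) ∂muJ ≤ 1 := by
      rw [integral_eq_lintegral_of_nonneg_ae
        (Filter.Eventually.of_forall fun x => (Real.exp_pos _).le) hexpm.aestronglyMeasurable]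
      have := ENNReal.toReal_mono ENNReal.one_ne_top hle
      simpa only [ENNReal.toReal_one] using this
    have h2 : ∫ x, f x ∂muJ ≤ ∫ x, (Real.exp (f x) - 1) ∂muJ := by
      refine integral_mono hfi (hexpint.sub (integrable_const 1)) fun x => ?_
      have := Real.add_one_le_exp (f x)
      simp only
      linarith
    rw [integral_sub hexpint (integrable_const 1), integral_const, probReal_univ] at h2
    simp at h2
    linarith
  -- Hoeffding bound under nuP
  have hΔnu : ∀ l : ℝ,
      ∫⁻ x, ENNReal.ofReal (Real.exp (l * ΔL x)) ∂nuP
        ≤ ENNReal.ofReal (Real.exp (l ^ 2 * c / (2 * M))) := by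
    intro l
    have hfm : Measurable fun x : 𝒲 × (Fin M → Bool) × (Bool → Fin M → Bool → 𝒵) × Bool =>
        ENNReal.ofReal (Real.exp (l * ΔL x)) :=
      ((hΔLmeas.const_mul l).exp).ennreal_ofReal
    have hcomp : Measurable fun p : Ω × (Fin M → Bool) =>
        ENNReal.ofReal (Real.exp (l * ΔL (W p.1, p.2, Zt p.1, R p.1))) := hfm.comp hmapP
    rw [hnuP, lintegral_map hfm hmapP, lintegral_prod _ hcomp.aemeasurable]
    have hinner : ∀ ω : Ω,
        ∫⁻ s, ENNReal.ofReal (Real.exp (l * ΔL (W ω, s, Zt ω, R ω)))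
            ∂((PMF.uniformOfFintype (Fin M → Bool)).toMeasure)
          ≤ ENNReal.ofReal (Real.exp (l ^ 2 * c / (2 * M))) := by
      intro ω
      rw [lintegral_fintype]
      have hsing : ∀ s : Fin M → Bool,
          (PMF.uniformOfFintype (Fin M → Bool)).toMeasure {s} = ((2 : ENNReal) ^ M)⁻¹ := by
        intro s
        rw [PMF.toMeasure_apply_singleton _ _ (measurableSet_singleton s),
          PMF.uniformOfFintype_apply]
        norm_num [Fintype.card_fun]
      have hbound := aux_hoeff_sum hM a b l hab
        (fun j v => ℓ (W ω) (Zt ω (R ω) j v)) (fun j v => hℓbdd _ _)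
      calc ∑ s : Fin M → Bool, ENNReal.ofReal (Real.exp (l * ΔL (W ω, s, Zt ω, R ω)))
            * (PMF.uniformOfFintype (Fin M → Bool)).toMeasure {s}
          = (∑ s : Fin M → Bool, ENNReal.ofReal (Real.exp (l * ΔL (W ω, s, Zt ω, R ω))))
              * ((2 : ENNReal) ^ M)⁻¹ := by
            simp only [hsing]
            rw [← Finset.sum_mul]
        _ ≤ (ENNReal.ofReal (2 ^ M * Real.exp (l ^ 2 * c / (2 * M)))) * ((2 : ENNReal) ^ M)⁻¹ := by
            gcongr
            rw [← ENNReal.ofReal_sum_of_nonneg (fun s _ => (Real.exp_pos _).le)]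
            apply ENNReal.ofReal_le_ofReal
            calc ∑ s : Fin M → Bool, Real.exp (l * ΔL (W ω, s, Zt ω, R ω))
                = ∑ s : Fin M → Bool, Real.exp (l * ((M:ℝ)⁻¹ * ∑ j, ℓ (W ω) (Zt ω (R ω) j (!(s j)))
                    - (M:ℝ)⁻¹ * ∑ j, ℓ (W ω) (Zt ω (R ω) j (s j)))) :=
                  Finset.sum_congr rfl fun s _ => by rw [hΔL]
              _ ≤ 2 ^ M * Real.exp (l ^ 2 * (b - a) ^ 2 / (2 * M)) := hbound
              _ = 2 ^ M * Real.exp (l ^ 2 * c / (2 * M)) := by rw [hc]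
        _ = ENNReal.ofReal (Real.exp (l ^ 2 * c / (2 * M))) := by
            rw [ENNReal.ofReal_mul (by positivity), ENNReal.ofReal_pow (by norm_num : (0:ℝ) ≤ 2),
              ENNReal.ofReal_ofNat, mul_right_comm,
              ENNReal.mul_inv_cancel (by positivity) (by simp), one_mul]
    calc ∫⁻ ω, ∫⁻ s, ENNReal.ofReal (Real.exp (l * ΔL (W ω, s, Zt ω, R ω)))
            ∂((PMF.uniformOfFintype (Fin M → Bool)).toMeasure) ∂P
        ≤ ∫⁻ _, ENNReal.ofReal (Real.exp (l ^ 2 * c / (2 * M))) ∂P := lintegral_mono hinner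
      _ = ENNReal.ofReal (Real.exp (l ^ 2 * c / (2 * M))) := by
          rw [lintegral_const, measure_univ, mul_one]
  -- key inequality for every l
  have hkey : ∀ l : ℝ, l * (∫ x, ΔL x ∂muJ) ≤ (∫ x, idens x ∂muJ) + l ^ 2 * c / (2 * M) := by
    intro l
    set K := l ^ 2 * c / (2 * M) with hK
    have hintf : Integrable (fun x => l * ΔL x - idens x - K) muJ :=
      ((hΔLint.const_mul l).sub hidensint).sub (integrable_const K)
    have hmeasf : Measurable (fun x => l * ΔL x - idens x - K) :=
      ((hΔLmeas.const_mul l).sub hidens).sub measurable_const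
    have hlin : ∫⁻ x, ENNReal.ofReal (Real.exp (l * ΔL x - idens x - K)) ∂muJ ≤ 1 := by
      have hCM' := hCM (fun x => l * ΔL x - K) ((hΔLmeas.const_mul l).sub measurable_const)
      have heq1 : (fun x => ENNReal.ofReal (Real.exp (l * ΔL x - idens x - K)))
          = fun x => ENNReal.ofReal (Real.exp ((l * ΔL x - K) - idens x)) := by
        funext x; congr 2; ring
      rw [heq1, hCM']
      calc ∫⁻ x, ENNReal.ofReal (Real.exp (l * ΔL x - K)) ∂nuP
          = (∫⁻ x, ENNReal.ofReal (Real.exp (l * ΔL x)) ∂nuP) * ENNReal.ofReal (Real.exp (-K)) := by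
            rw [← lintegral_mul_const _ ((hΔLmeas.const_mul l).exp).ennreal_ofReal]
            refine lintegral_congr fun x => ?_
            rw [← ENNReal.ofReal_mul (Real.exp_pos _).le, ← Real.exp_add, sub_eq_add_neg]
        _ ≤ ENNReal.ofReal (Real.exp K) * ENNReal.ofReal (Real.exp (-K)) := by
            gcongr
            exact hΔnu l
        _ = 1 := by
            rw [← ENNReal.ofReal_mul (Real.exp_pos _).le, ← Real.exp_add]
            simp
    have h0 := hEB _ hmeasf hintf hlin
    have hint1 : Integrable (fun x => l * ΔL x - idens x) muJ :=
      (hΔLint.const_mul l).sub hidensint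
    have hint2 : Integrable (fun x => l * ΔL x) muJ := hΔLint.const_mul l
    rw [integral_sub hint1 (integrable_const K), integral_sub hint2 hidensint,
      integral_const, probReal_univ, integral_const_mul] at h0
    simp only [ENNReal.toReal_one, smul_eq_mul, one_mul] at h0
    linarith
  -- nonnegativity of the mutual information
  have hInn : 0 ≤ ∫ x, idens x ∂muJ := by
    have hCM0 := hCM (fun _ => 0) measurable_const
    have hlin : ∫⁻ x, ENNReal.ofReal (Real.exp (-idens x)) ∂muJ ≤ 1 := by
      have heq : (fun x => ENNReal.ofReal (Real.exp (-idens x)))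
          = fun x : 𝒲 × (Fin M → Bool) × (Bool → Fin M → Bool → 𝒵) × Bool =>
            ENNReal.ofReal (Real.exp ((0:ℝ) - idens x)) := by
        funext x; rw [zero_sub]
      rw [heq, hCM0]
      simp only [Real.exp_zero, ENNReal.ofReal_one]
      rw [lintegral_one, measure_univ]
    have h0 := hEB (fun x => -idens x) hidens.neg hidensint.neg hlin
    rw [integral_neg] at h0
    linarith
  -- optimization
  set D := ∫ x, ΔL x ∂muJ with hDdef
  set I := ∫ x, idens x ∂muJ with hIdef
  rcases le_or_gt D 0 with hD0 | hD0
  · exact hD0.trans (Real.sqrt_nonneg _)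
  · rcases eq_or_lt_of_le (sq_nonneg (b - a)) with hc0 | hcpos
    · exfalso
      have hk := hkey ((I + 1) / D)
      rw [div_mul_cancel₀ _ (ne_of_gt hD0)] at hk
      have hz : ((I + 1) / D) ^ 2 * c / (2 * M) = 0 := by
        rw [hc, ← hc0, mul_zero, zero_div]
      linarith
    · have hcpos' : (0:ℝ) < c := hc ▸ hcpos
      have hcne : c ≠ 0 := ne_of_gt hcpos'
      have hk := hkey (D * M / c)
      have e1 : D * M / c * D = D ^ 2 * M / c := by field_simp
      have e2 : (D * M / c) ^ 2 * c / (2 * M) = D ^ 2 * M / (2 * c) := by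
        field_simp
      rw [e1, e2] at hk
      have e3 : D ^ 2 * M / c = 2 * (D ^ 2 * M / (2 * c)) := by field_simp
      have h4 : D ^ 2 * M / (2 * c) ≤ I := by linarith
      have h5 : D ^ 2 * M ≤ I * (2 * c) := (div_le_iff₀ (by positivity)).mp h4
      apply Real.le_sqrt_of_sq_le
      rw [le_div_iff₀ hMr]
      calc D ^ 2 * M ≤ I * (2 * c) := h5
        _ = 2 * c * I := by ring
end

section
/- (Proposition 2, environment-level exponential inequality.) For every λ ∈ ℝ, E over the joint distribution of (U, Z̃, R, S₁:ₙ) of exp( λ·ΔL̃(U, Z̃, R, S₁:ₙ) − λ²(b−a)²/(2N) − ı(U; R, S₁:ₙ | Z̃) ) ≤ 1, where ΔL̃ is the difference between the averaged per-task training loss of U evaluated on the complementary selection (R̄, S̄₁:ₙ) and on the selection (R, S₁:ₙ), and ı(U; R, S₁:ₙ | Z̃) = log( dP_{U R S₁:ₙ | Z̃} / d(P_{U|Z̃} ⊗ P_{R S₁:ₙ}) ). -/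
open MeasureTheory ProbabilityTheory Real
open scoped ENNReal

lemma meas_apply_bool {X Y : Type*} [MeasurableSpace X] [MeasurableSpace Y]
    {F : X → Bool → Y} (hF : ∀ b, Measurable fun x => F x b) {g : X → Bool}
    (hg : Measurable g) : Measurable fun x => F x (g x) := by
  have h : (fun x => F x (g x)) = fun x => if g x then F x true else F x false := by
    funext x; cases hgx : g x <;> simp [hgx]
  rw [h]
  refine Measurable.ite ?_ (hF true) (hF false)
  have : {x | g x = true} = g ⁻¹' {true} := by ext x; simp
  rw [this]; exact hg (measurableSet_singleton true)
lemma aux_pair {M : ℕ} (a b t : ℝ) (hab : a ≤ b) (g : Bool → (Fin M → Bool) → ℝ)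
    (hg : ∀ r s, a ≤ g r s ∧ g r s ≤ b) :
    ∑ p : Bool × (Fin M → Bool), Real.exp (t * (g (!p.1) (fun j => !(p.2 j)) - g p.1 p.2))
      ≤ (Fintype.card (Bool × (Fin M → Bool))) * Real.exp (t ^ 2 * (b - a) ^ 2 / 2) := by
  have negInv : Function.Involutive (fun s : Fin M → Bool => fun j => !(s j)) := by
    intro s; funext j; simp
  set e := negInv.toPerm _ with he
  rw [Fintype.sum_prod_type, Fintype.sum_bool]
  simp only [Bool.not_true, Bool.not_false]
  have h1 : ∑ s : Fin M → Bool, Real.exp (t * (g false (fun j => !(s j)) - g true s))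
      = ∑ s : Fin M → Bool, Real.exp (-(t * (g true (fun j => !(s j)) - g false s))) := by
    rw [← Equiv.sum_comp e (fun s => Real.exp (-(t * (g true (fun j => !(s j)) - g false s))))]
    refine Finset.sum_congr rfl fun s _ => ?_
    have h2 : e s = fun j => !(s j) := rfl
    rw [h2]
    simp only [Bool.not_not]
    congr 1
    ring
  rw [h1, ← Finset.sum_add_distrib]
  have hbd : ∀ s : Fin M → Bool,
      Real.exp (-(t * (g true (fun j => !(s j)) - g false s)))
        + Real.exp (t * (g true (fun j => !(s j)) - g false s))
      ≤ 2 * Real.exp (t ^ 2 * (b - a) ^ 2 / 2) := by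
    intro s
    have h1' := hg true (fun j => !(s j))
    have h2' := hg false s
    have hxb : (g true (fun j => !(s j)) - g false s) ^ 2 ≤ (b - a) ^ 2 := by nlinarith
    have hc : Real.exp (-(t * (g true (fun j => !(s j)) - g false s)))
        + Real.exp (t * (g true (fun j => !(s j)) - g false s))
        = 2 * Real.cosh (t * (g true (fun j => !(s j)) - g false s)) := by
      rw [Real.cosh_eq]; ring
    rw [hc]
    have h4 : Real.cosh (t * (g true (fun j => !(s j)) - g false s))
        ≤ Real.exp ((t * (g true (fun j => !(s j)) - g false s)) ^ 2 / 2) :=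
      Real.cosh_le_exp_half_sq _
    have h5 : Real.exp ((t * (g true (fun j => !(s j)) - g false s)) ^ 2 / 2)
        ≤ Real.exp (t ^ 2 * (b - a) ^ 2 / 2) := by
      apply Real.exp_le_exp.2
      rw [mul_pow]
      nlinarith [sq_nonneg t, mul_le_mul_of_nonneg_left hxb (sq_nonneg t)]
    linarith
  calc ∑ s : Fin M → Bool, (Real.exp (-(t * (g true (fun j => !(s j)) - g false s)))
        + Real.exp (t * (g true (fun j => !(s j)) - g false s)))
      ≤ ∑ _s : Fin M → Bool, 2 * Real.exp (t ^ 2 * (b - a) ^ 2 / 2) :=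
        Finset.sum_le_sum fun s _ => hbd s
    _ = (Fintype.card (Bool × (Fin M → Bool))) * Real.exp (t ^ 2 * (b - a) ^ 2 / 2) := by
        rw [Finset.sum_const, Finset.card_univ]
        simp only [Fintype.card_prod, Fintype.card_bool, nsmul_eq_mul, Nat.cast_mul,
          Nat.cast_ofNat]
        ring

lemma aux_full (N M : ℕ) (hN : 0 < N) (a b lam : ℝ) (hab : a ≤ b)
    (g : Fin N → Bool → (Fin M → Bool) → ℝ) (hg : ∀ i r s, a ≤ g i r s ∧ g i r s ≤ b) :
    ∑ rs : (Fin N → Bool) × (Fin N → Fin M → Bool),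
      Real.exp (lam * ((N : ℝ)⁻¹ * ∑ i, g i (!(rs.1 i)) (fun j => !(rs.2 i j)) -
        (N : ℝ)⁻¹ * ∑ i, g i (rs.1 i) (rs.2 i))) ≤
    (Fintype.card ((Fin N → Bool) × (Fin N → Fin M → Bool))) *
      Real.exp (lam ^ 2 * (b - a) ^ 2 / (2 * N)) := by
  have hN' : (N : ℝ) ≠ 0 := Nat.cast_ne_zero.2 hN.ne'
  set t := lam / N with ht
  set f : Fin N → Bool × (Fin M → Bool) → ℝ :=
    fun i p => Real.exp (t * (g i (!p.1) (fun j => !(p.2 j)) - g i p.1 p.2)) with hf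
  have hsummand : ∀ rs : (Fin N → Bool) × (Fin N → Fin M → Bool),
      Real.exp (lam * ((N : ℝ)⁻¹ * ∑ i, g i (!(rs.1 i)) (fun j => !(rs.2 i j)) -
        (N : ℝ)⁻¹ * ∑ i, g i (rs.1 i) (rs.2 i))) = ∏ i, f i (rs.1 i, rs.2 i) := by
    intro rs
    rw [hf, ← Real.exp_sum]
    congr 1
    rw [← Finset.mul_sum, Finset.sum_sub_distrib, ht]
    field_simp
  simp only [hsummand]
  set e := Equiv.arrowProdEquivProdArrow (Fin N) (fun _ => Bool) (fun _ => Fin M → Bool) with he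
  rw [← Equiv.sum_comp e (fun rs => ∏ i, f i (rs.1 i, rs.2 i))]
  have hre : ∀ h : Fin N → Bool × (Fin M → Bool),
      (∏ i, f i ((e h).1 i, (e h).2 i)) = ∏ i, f i (h i) := by
    intro h; exact Finset.prod_congr rfl fun i _ => rfl
  simp only [hre]
  rw [← Fintype.piFinset_univ, Finset.sum_prod_piFinset]
  have hpair : ∀ i : Fin N, ∑ p : Bool × (Fin M → Bool), f i p
      ≤ (Fintype.card (Bool × (Fin M → Bool))) * Real.exp (t ^ 2 * (b - a) ^ 2 / 2) :=
    fun i => aux_pair a b t hab (g i) (hg i)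
  calc ∏ i : Fin N, ∑ p : Bool × (Fin M → Bool), f i p
      ≤ ∏ _i : Fin N, ((Fintype.card (Bool × (Fin M → Bool)) : ℝ) *
          Real.exp (t ^ 2 * (b - a) ^ 2 / 2)) := by
        apply Finset.prod_le_prod
        · intro i _; exact Finset.sum_nonneg fun p _ => (Real.exp_pos _).le
        · intro i _; exact hpair i
    _ = (Fintype.card ((Fin N → Bool) × (Fin N → Fin M → Bool))) *
        Real.exp (lam ^ 2 * (b - a) ^ 2 / (2 * N)) := by
        rw [Finset.prod_const, Finset.card_univ, mul_pow, ← Real.exp_nat_mul]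
        congr 1
        · simp [Fintype.card_prod, Fintype.card_fun, Fintype.card_bool, mul_pow]
        · congr 1
          rw [ht, Fintype.card_fin]
          field_simp


abbrev RSt (N M : ℕ) : Type := (Fin N → Bool) × (Fin N → Fin M → Bool)

abbrev Xt (𝒰 𝒵 : Type*) (N M : ℕ) : Type _ :=
  𝒰 × RSt N M × (Fin N → Bool → Fin M → Bool → 𝒵)

/-- Proposition 2 (environment-level exponential inequality).  `Zt ω i r j s` is the supersample
point of the `i`-th task pair (task selected by bit `r`), sample `j`, selection bit `s`.
`Lhat u d` is the average per-task training loss `L̂_d(u)` of hyperparameter `u` on dataset `d`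
(bounded in `[a,b]` since the loss is).  `muJ` is the joint law of `(U, (R,S₁:ₙ), Z̃)` and `nuP`
the decoupled law where `(R,S₁:ₙ)` is an independent uniform Bernoulli tuple; `idens` is the
conditional information density `ı(U;R,S₁:ₙ|Z̃)`.  For every `λ`,
`E[exp(λ·ΔL̃ − λ²(b−a)²/(2N) − ı)] ≤ 1`. -/
theorem stmt_12 {Ω 𝒰 𝒵 : Type*} [MeasurableSpace Ω] [MeasurableSpace 𝒰] [MeasurableSpace 𝒵]
    (P : Measure Ω) [IsProbabilityMeasure P]
    (N M : ℕ) (hN : 0 < N) (hM : 0 < M) (a b : ℝ) (hab : a ≤ b)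
    (Lhat : 𝒰 → (Fin M → 𝒵) → ℝ) (hLhatmeas : Measurable (Function.uncurry Lhat))
    (hLhatbdd : ∀ u d, a ≤ Lhat u d ∧ Lhat u d ≤ b)
    (U : Ω → 𝒰) (Zt : Ω → Fin N → Bool → Fin M → Bool → 𝒵)
    (R : Ω → Fin N → Bool) (S : Ω → Fin N → Fin M → Bool)
    (hU : Measurable U) (hZt : Measurable Zt) (hR : Measurable R) (hS : Measurable S)
    (muJ nuP : Measure (𝒰 × ((Fin N → Bool) × (Fin N → Fin M → Bool)) ×
      (Fin N → Bool → Fin M → Bool → 𝒵)))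
    (hmuJ : muJ = P.map (fun ω => (U ω, (R ω, S ω), Zt ω)))
    (hnuP : nuP = (P.prod
        ((PMF.uniformOfFintype ((Fin N → Bool) × (Fin N → Fin M → Bool))).toMeasure)).map
      (fun p => (U p.1, p.2, Zt p.1)))
    (hac : muJ ≪ nuP)
    (idens : 𝒰 × ((Fin N → Bool) × (Fin N → Fin M → Bool)) ×
      (Fin N → Bool → Fin M → Bool → 𝒵) → ℝ)
    (hidens : Measurable idens)
    (hd : muJ.rnDeriv nuP =ᵐ[nuP] fun x => ENNReal.ofReal (Real.exp (idens x)))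
    (ΔL : 𝒰 × ((Fin N → Bool) × (Fin N → Fin M → Bool)) ×
      (Fin N → Bool → Fin M → Bool → 𝒵) → ℝ)
    (hΔL : ∀ u r s zt, ΔL (u, (r, s), zt) =
      (N : ℝ)⁻¹ * ∑ i, Lhat u (fun j => zt i (!(r i)) j (!(s i j))) -
        (N : ℝ)⁻¹ * ∑ i, Lhat u (fun j => zt i (r i) j (s i j))) :
    ∀ lam : ℝ,
      ∫ x, Real.exp (lam * ΔL x - lam ^ 2 * (b - a) ^ 2 / (2 * N) - idens x) ∂muJ ≤ 1 := by
  classical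
  intro lam
  have hΔLeq : ΔL = fun x =>
      (N : ℝ)⁻¹ * ∑ i, Lhat x.1 (fun j => x.2.2 i (!(x.2.1.1 i)) j (!(x.2.1.2 i j))) -
        (N : ℝ)⁻¹ * ∑ i, Lhat x.1 (fun j => x.2.2 i (x.2.1.1 i) j (x.2.1.2 i j)) := by
    funext x
    obtain ⟨u, ⟨r, s⟩, zt⟩ := x
    exact hΔL u r s zt
  set c := lam ^ 2 * (b - a) ^ 2 / (2 * (N : ℝ)) with hc
  have base : ∀ (i : Fin N) (r : Bool) (j : Fin M) (s : Bool),
      Measurable (fun x : Xt 𝒰 𝒵 N M => x.2.2 i r j s) := by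
    intro i r j s
    exact (measurable_pi_apply s).comp ((measurable_pi_apply j).comp
      ((measurable_pi_apply r).comp ((measurable_pi_apply i).comp
        (measurable_snd.comp measurable_snd))))
  have hterm : ∀ (i : Fin N) (br : Xt 𝒰 𝒵 N M → Bool) (bs : Xt 𝒰 𝒵 N M → Fin M → Bool),
      Measurable br → Measurable bs →
      Measurable (fun x : Xt 𝒰 𝒵 N M => Lhat x.1 (fun j => x.2.2 i (br x) j (bs x j))) := by
    intro i br bs hbr hbs
    have hj : ∀ j : Fin M, Measurable (fun x : Xt 𝒰 𝒵 N M => x.2.2 i (br x) j (bs x j)) := by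
      intro j
      apply meas_apply_bool (F := fun (x : Xt 𝒰 𝒵 N M) s => x.2.2 i (br x) j s)
      · intro s
        exact meas_apply_bool (F := fun (x : Xt 𝒰 𝒵 N M) r => x.2.2 i r j s)
          (fun r => base i r j s) hbr
      · exact (measurable_pi_apply j).comp hbs
    exact hLhatmeas.comp (measurable_fst.prodMk (measurable_pi_lambda _ hj))
  have hr1 : ∀ i : Fin N, Measurable (fun x : Xt 𝒰 𝒵 N M => x.2.1.1 i) := fun i =>
    (measurable_pi_apply i).comp (measurable_fst.comp (measurable_fst.comp measurable_snd))
  have hs1 : ∀ (i : Fin N) (j : Fin M), Measurable (fun x : Xt 𝒰 𝒵 N M => x.2.1.2 i j) :=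
    fun i j => (measurable_pi_apply j).comp ((measurable_pi_apply i).comp
      (measurable_snd.comp (measurable_fst.comp measurable_snd)))
  have hΔLmeas : Measurable ΔL := by
    rw [hΔLeq]
    apply Measurable.sub
    · refine Measurable.const_mul ?_ _
      refine Finset.measurable_sum _ fun i _ => ?_
      exact hterm i _ _ ((Measurable.of_discrete (f := fun b : Bool => !b)).comp (hr1 i))
        (measurable_pi_lambda _ fun j =>
          (Measurable.of_discrete (f := fun b : Bool => !b)).comp (hs1 i j))
    · refine Measurable.const_mul ?_ _
      refine Finset.measurable_sum _ fun i _ => ?_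
      exact hterm i _ _ (hr1 i) (measurable_pi_lambda _ fun j => hs1 i j)
  have hmapP : Measurable (fun p : Ω × RSt N M => (U p.1, p.2, Zt p.1)) :=
    (hU.comp measurable_fst).prodMk (measurable_snd.prodMk (hZt.comp measurable_fst))
  haveI hPnu : IsProbabilityMeasure nuP := by
    rw [hnuP]; exact Measure.isProbabilityMeasure_map hmapP.aemeasurable
  haveI hPmu : IsProbabilityMeasure muJ := by
    rw [hmuJ]
    exact Measure.isProbabilityMeasure_map (hU.prodMk ((hR.prodMk hS).prodMk hZt)).aemeasurable
  have hFmeas : Measurable (fun x : Xt 𝒰 𝒵 N M => Real.exp (lam * ΔL x - c - idens x)) :=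
    (((hΔLmeas.const_mul lam).sub measurable_const).sub hidens).exp
  have hG : Measurable (fun x : Xt 𝒰 𝒵 N M => ENNReal.ofReal (Real.exp (lam * ΔL x - c))) :=
    ((hΔLmeas.const_mul lam).sub measurable_const).exp.ennreal_ofReal
  have hdens : Measurable (fun x : Xt 𝒰 𝒵 N M => ENNReal.ofReal (Real.exp (idens x))) :=
    hidens.exp.ennreal_ofReal
  rw [integral_eq_lintegral_of_nonneg_ae (ae_of_all _ fun x => (Real.exp_pos _).le)
    hFmeas.aestronglyMeasurable]
  have hkey : ∫⁻ x, ENNReal.ofReal (Real.exp (lam * ΔL x - c - idens x)) ∂muJ ≤ 1 := by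
    have h1 : muJ = nuP.withDensity (fun x => ENNReal.ofReal (Real.exp (idens x))) := by
      rw [← withDensity_congr_ae hd, Measure.withDensity_rnDeriv_eq muJ nuP hac]
    rw [h1, lintegral_withDensity_eq_lintegral_mul _ hdens hFmeas.ennreal_ofReal]
    have h2 : ∀ x : Xt 𝒰 𝒵 N M, ((fun x : Xt 𝒰 𝒵 N M => ENNReal.ofReal (Real.exp (idens x))) *
        fun x : Xt 𝒰 𝒵 N M => ENNReal.ofReal (Real.exp (lam * ΔL x - c - idens x))) x
        = ENNReal.ofReal (Real.exp (lam * ΔL x - c)) := by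
      intro x
      simp only [Pi.mul_apply]
      rw [← ENNReal.ofReal_mul (Real.exp_pos _).le, ← Real.exp_add]
      congr 2
      ring
    rw [lintegral_congr h2, hnuP, lintegral_map hG hmapP]
    rw [lintegral_prod (fun p : Ω × RSt N M => ENNReal.ofReal (Real.exp (lam * ΔL (U p.1, p.2, Zt p.1) - c))) (hG.comp hmapP).aemeasurable]
    have hin : ∀ ω : Ω,
        ∫⁻ rs : RSt N M, ENNReal.ofReal (Real.exp (lam * ΔL (U ω, rs, Zt ω) - c))
        ∂((PMF.uniformOfFintype (RSt N M)).toMeasure) ≤ 1 := by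
      intro ω
      rw [lintegral_fintype]
      have hμs : ∀ rs : RSt N M, ((PMF.uniformOfFintype (RSt N M)).toMeasure) {rs}
          = (Fintype.card (RSt N M) : ℝ≥0∞)⁻¹ := by
        intro rs
        rw [PMF.toMeasure_apply_singleton _ _ (measurableSet_singleton rs),
          PMF.uniformOfFintype_apply]
      simp only [hμs]
      rw [← Finset.sum_mul]
      have hsum : ∑ rs : RSt N M, ENNReal.ofReal (Real.exp (lam * ΔL (U ω, rs, Zt ω) - c))
          = ENNReal.ofReal (∑ rs : RSt N M, Real.exp (lam * ΔL (U ω, rs, Zt ω) - c)) :=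
        (ENNReal.ofReal_sum_of_nonneg (fun rs _ => (Real.exp_pos _).le)).symm
      rw [hsum]
      have hkey2 := aux_full N M hN a b lam hab
        (fun i r' s' => Lhat (U ω) (fun j => Zt ω i r' j (s' j)))
        (fun i r' s' => hLhatbdd (U ω) _)
      rw [← hc] at hkey2
      have hsum1 : ∑ rs : RSt N M, Real.exp (lam * ΔL (U ω, rs, Zt ω))
          ≤ (Fintype.card (RSt N M) : ℝ) * Real.exp c := by
        refine le_trans (le_of_eq (Finset.sum_congr rfl fun rs _ => ?_)) hkey2
        rw [show ΔL (U ω, rs, Zt ω) = _ from hΔL (U ω) rs.1 rs.2 (Zt ω)]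
      have hre : ∑ rs : RSt N M, Real.exp (lam * ΔL (U ω, rs, Zt ω) - c)
          ≤ (Fintype.card (RSt N M) : ℝ) := by
        calc ∑ rs : RSt N M, Real.exp (lam * ΔL (U ω, rs, Zt ω) - c)
            = (∑ rs : RSt N M, Real.exp (lam * ΔL (U ω, rs, Zt ω))) * Real.exp (-c) := by
              rw [Finset.sum_mul]
              refine Finset.sum_congr rfl fun rs _ => ?_
              rw [← Real.exp_add, sub_eq_add_neg]
          _ ≤ ((Fintype.card (RSt N M) : ℝ) * Real.exp c) * Real.exp (-c) :=
              mul_le_mul_of_nonneg_right hsum1 (Real.exp_pos _).le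
          _ = (Fintype.card (RSt N M) : ℝ) := by rw [mul_assoc, ← Real.exp_add]; simp
      calc ENNReal.ofReal (∑ rs : RSt N M, Real.exp (lam * ΔL (U ω, rs, Zt ω) - c))
            * (Fintype.card (RSt N M) : ℝ≥0∞)⁻¹
          ≤ (Fintype.card (RSt N M) : ℝ≥0∞) * (Fintype.card (RSt N M) : ℝ≥0∞)⁻¹ := by
            apply mul_le_mul_left
            refine le_trans (ENNReal.ofReal_le_ofReal hre) ?_
            rw [ENNReal.ofReal_natCast]
        _ = 1 := ENNReal.mul_inv_cancel (by exact_mod_cast Fintype.card_ne_zero)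
            (ENNReal.natCast_ne_top _)
    calc ∫⁻ ω, ∫⁻ rs : RSt N M, ENNReal.ofReal (Real.exp (lam * ΔL (U ω, rs, Zt ω) - c))
          ∂((PMF.uniformOfFintype (RSt N M)).toMeasure) ∂P
        ≤ ∫⁻ _ω, 1 ∂P := lintegral_mono hin
      _ = 1 := by simp
  calc (∫⁻ x, ENNReal.ofReal (Real.exp (lam * ΔL x - c - idens x)) ∂muJ).toReal
      ≤ (1 : ℝ≥0∞).toReal := ENNReal.toReal_mono (by simp) hkey
    _ = 1 := by simp
end
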